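/- Let π : X → B be an étale bundle (a surjective local homeomorphism) such that B is a sober space. Then the generalised Munn semigroup T_{Γ(π)} of the sheaf of sections Γ(π), regarded as a presheaf over the semilattice Ω(B), is isomorphic to the inverse semigroup La(π) of principal partial automorphisms of π. -/

import Mathlib

/-- A meet-semilattice: a commutative semigroup all of whose elements are idempotent. -/
class MeetSL (E : Type*) extends CommSemigroup E where
  idem : ∀ e : E, e * e = e

/-- The natural partial order on a meet-semilattice: `e ≤ f` iff `e = ef`. -/
def sle {E : Type*} [MeetSL E] (e f : E) : Prop := e = e * f

/-- The principal order-ideal `e↓ = {h ∈ E : h ≤ e}` of a meet-semilattice. -/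
abbrev dOn (E : Type*) [MeetSL E] (e : E) : Type _ := {h : E // sle h e}

/-- A presheaf of sets over a meet-semilattice `E`, viewed as a supported action
`(X, E, p)` of `E` on `X`. -/
structure SPresheaf (X : Type*) (E : Type*) [MeetSL E] where
  act : X → E → X
  p : X → E
  act_act : ∀ x e f, act (act x e) f = act x (e * f)
  act_p : ∀ x, act x (p x) = x
  p_act : ∀ x e, p (act x e) = p x * e

namespace SPresheaf
variable {X E : Type*} [MeetSL E]

/-- The natural partial order on a presheaf: `x ≤ y` iff `x = y · p(x)`. -/
def xle (P : SPresheaf X E) (x y : X) : Prop := x = P.act y (P.p x)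

/-- The underlying set `X · e = {x ∈ X : p(x) ≤ e}` of the principal subpresheaf at `e`. -/
abbrev sub (P : SPresheaf X E) (e : E) : Type _ := {x : X // sle (P.p x) e}

end SPresheaf

/-- An element of the generalised Munn semigroup `T_X` of the presheaf `P`: an isomorphism
`(α, θ)` between the principal subpresheaves `(X·e, e↓)` and `(X·f, f↓)`, i.e. a pair of
order-isomorphisms with `p(α(x)) = θ(p(x))` for all `x ∈ X·e`. -/
structure MunnElt {X E : Type*} [MeetSL E] (P : SPresheaf X E) where
  e : E
  f : E
  α : P.sub e ≃ P.sub f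
  θ : dOn E e ≃ dOn E f
  α_ord : ∀ x y : P.sub e, P.xle x.1 y.1 ↔ P.xle (α x).1 (α y).1
  θ_ord : ∀ a b : dOn E e, sle a.1 b.1 ↔ sle (θ a).1 (θ b).1
  compat : ∀ x : P.sub e, P.p (α x).1 = (θ ⟨P.p x.1, x.2⟩).1

namespace MunnElt
variable {X E : Type*} [MeetSL E] {P : SPresheaf X E}

/-- The partial-bijection graph of the first component of a Munn element. -/
def maps (t : MunnElt P) (x y : X) : Prop :=
  ∃ h : sle (P.p x) t.e, (t.α ⟨x, h⟩).1 = y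

/-- The partial-bijection graph of the second component of a Munn element. -/
def mapsE (t : MunnElt P) (a b : E) : Prop :=
  ∃ h : sle a t.e, (t.θ ⟨a, h⟩).1 = b

end MunnElt

/-- `mul` is the multiplication of the generalised Munn semigroup `T_X`: the product
`mul a b` is obtained by restricting `a` and `b` to the intersection of the relevant
principal subpresheaves and composing (apply `b` first, then `a`). -/
def IsMunnMul {X E : Type*} [MeetSL E] {P : SPresheaf X E}
    (mul : MunnElt P → MunnElt P → MunnElt P) : Prop :=
  ∀ a b : MunnElt P,
    (∀ x z : X, (mul a b).maps x z ↔ ∃ y, b.maps x y ∧ a.maps y z) ∧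
    (∀ h k : E, (mul a b).mapsE h k ↔ ∃ m, b.mapsE h m ∧ a.mapsE m k)

/-- `inv` sends each `(α, θ)` of the generalised Munn semigroup to `(α⁻¹, θ⁻¹)`. -/
def IsMunnInv {X E : Type*} [MeetSL E] {P : SPresheaf X E}
    (inv : MunnElt P → MunnElt P) : Prop :=
  ∀ t : MunnElt P,
    (∀ x y : X, (inv t).maps x y ↔ t.maps y x) ∧
    (∀ a b : E, (inv t).mapsE a b ↔ t.mapsE b a)

/-- The meet-semilattice `Ω(B)` of open subsets of a topological space under intersection. -/
abbrev OpenSets (B : Type*) [TopologicalSpace B] : Type _ := {U : Set B // IsOpen U}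

instance instMeetSLOpenSets (B : Type*) [TopologicalSpace B] : MeetSL (OpenSets B) where
  mul a b := ⟨a.1 ∩ b.1, a.2.inter b.2⟩
  mul_assoc a b c := Subtype.ext (Set.inter_assoc a.1 b.1 c.1)
  mul_comm a b := Subtype.ext (Set.inter_comm a.1 b.1)
  idem a := Subtype.ext (Set.inter_self a.1)

/-- A local section of a bundle `π : X → B`: a continuous map `σ : U → X` with `U ⊆ B`
open and `π ∘ σ = id`. -/
structure LocalSection {X B : Type*} [TopologicalSpace X] [TopologicalSpace B] (π : X → B) where
  dom : Set B
  dom_open : IsOpen dom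
  toFun : ↥dom → X
  cont : Continuous toFun
  sect : ∀ b : ↥dom, π (toFun b) = b.1

theorem LocalSection.ext' {X B : Type*} [TopologicalSpace X] [TopologicalSpace B] {π : X → B}
    {s t : LocalSection π} (hd : s.dom = t.dom)
    (h : ∀ (b : B) (hs : b ∈ s.dom) (ht : b ∈ t.dom), s.toFun ⟨b, hs⟩ = t.toFun ⟨b, ht⟩) :
    s = t := by
  cases s with | mk d o f c se =>
  cases t with | mk d' o' f' c' se' =>
  dsimp at hd
  subst hd
  have hf : f = f' := funext fun b => h b.1 b.2 b.2
  subst hf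
  rfl

/-- A principal partial automorphism of the bundle `π : X → B` (an element of `La(π)`):
a pair of homeomorphisms `θ : π⁻¹(U) → π⁻¹(V)`, `θ̂ : U → V` with `π ∘ θ = θ̂ ∘ π`. -/
structure PPAuto {X B : Type*} [TopologicalSpace X] [TopologicalSpace B] (π : X → B) where
  U : Set B
  V : Set B
  U_open : IsOpen U
  V_open : IsOpen V
  top : ↥(π ⁻¹' U) ≃ₜ ↥(π ⁻¹' V)
  bot : ↥U ≃ₜ ↥V
  comm : ∀ x : ↥(π ⁻¹' U), π (top x).1 = (bot ⟨π x.1, x.2⟩).1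

namespace PPAuto
variable {X B : Type*} [TopologicalSpace X] [TopologicalSpace B] {π : X → B}

/-- The graph of the upstairs component. -/
def mapsTop (t : PPAuto π) (x y : X) : Prop :=
  ∃ h : x ∈ π ⁻¹' t.U, (t.top ⟨x, h⟩).1 = y

/-- The graph of the downstairs component. -/
def mapsBot (t : PPAuto π) (u v : B) : Prop :=
  ∃ h : u ∈ t.U, (t.bot ⟨u, h⟩).1 = v

end PPAuto

/-- `mul` is the multiplication of `La(π)`: coordinatewise composition of partial
homeomorphisms (apply `b` first, then `a`). -/
def IsPPMul {X B : Type*} [TopologicalSpace X] [TopologicalSpace B] {π : X → B}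
    (mul : PPAuto π → PPAuto π → PPAuto π) : Prop :=
  ∀ a b : PPAuto π,
    (∀ x z : X, (mul a b).mapsTop x z ↔ ∃ y, b.mapsTop x y ∧ a.mapsTop y z) ∧
    (∀ u w : B, (mul a b).mapsBot u w ↔ ∃ v, b.mapsBot u v ∧ a.mapsBot v w)

/-- `inv` is the inversion of `La(π)`. -/
def IsPPInv {X B : Type*} [TopologicalSpace X] [TopologicalSpace B] {π : X → B}
    (inv : PPAuto π → PPAuto π) : Prop :=
  ∀ t : PPAuto π,
    (∀ x y : X, (inv t).mapsTop x y ↔ t.mapsTop y x) ∧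
    (∀ u v : B, (inv t).mapsBot u v ↔ t.mapsBot v u)

/-- The sheaf of local sections `Γ(π)` of a bundle `π : X → B`, as a presheaf over the
meet-semilattice of open subsets of `B`: the action is restriction of sections
(`σ · V = σ|_{V ∩ dom σ}`) and the support map is `p(σ) = dom σ`. -/
def sectionsPresheaf {X B : Type*} [TopologicalSpace X] [TopologicalSpace B] (π : X → B) :
    SPresheaf (LocalSection π) (OpenSets B) where
  act σ V :=
    { dom := σ.dom ∩ V.1
      dom_open := σ.dom_open.inter V.2
      toFun := fun b => σ.toFun ⟨b.1, b.2.1⟩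
      cont := σ.cont.comp (Continuous.subtype_mk continuous_subtype_val fun b => b.2.1)
      sect := fun b => σ.sect ⟨b.1, b.2.1⟩ }
  p σ := ⟨σ.dom, σ.dom_open⟩
  act_act σ e f := LocalSection.ext' (Set.inter_assoc σ.dom e.1 f.1) (fun _ _ _ => rfl)
  act_p σ := LocalSection.ext' (Set.inter_self σ.dom) (fun _ _ _ => rfl)
  p_act _ _ := rfl

set_option linter.unusedSectionVars false

section OS
variable {B : Type*} [TopologicalSpace B]

lemma os_mul_val (a b : OpenSets B) : (a * b).1 = a.1 ∩ b.1 := rfl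

lemma sle_iff {a b : OpenSets B} : sle a b ↔ a.1 ⊆ b.1 := by
  unfold sle
  rw [Subtype.ext_iff, os_mul_val]
  constructor
  · intro h; rw [h]; exact Set.inter_subset_right
  · intro h; exact (Set.inter_eq_left.mpr h).symm

lemma sle_refl (a : OpenSets B) : sle a a := (MeetSL.idem a).symm

lemma eq_of_dOn [T0Space B] {W : OpenSets B} {v v' : B} (hv : v ∈ W.1) (hv' : v' ∈ W.1)
    (h : ∀ Z : dOn (OpenSets B) W, v ∈ Z.1.1 ↔ v' ∈ Z.1.1) : v = v' := by
  apply Inseparable.eq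
  rw [inseparable_iff_forall_isOpen]
  intro s hs
  have h2 := h ⟨⟨s ∩ W.1, hs.inter W.2⟩, sle_iff.mpr Set.inter_subset_right⟩
  simp only [Set.mem_inter_iff] at h2
  constructor
  · intro hx; exact (h2.mp ⟨hx, hv⟩).1
  · intro hx; exact (h2.mpr ⟨hx, hv'⟩).1

end OS

structure ThetaIso (B : Type*) [TopologicalSpace B] (U V : OpenSets B) where
  t : dOn (OpenSets B) U ≃ dOn (OpenSets B) V
  ord : ∀ a b : dOn (OpenSets B) U, sle a.1 b.1 ↔ sle (t a).1 (t b).1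

namespace ThetaIso
variable {B : Type*} [TopologicalSpace B] {U V : OpenSets B} (T : ThetaIso B U V)

def symm : ThetaIso B V U where
  t := T.t.symm
  ord a b := by
    have h := T.ord (T.t.symm a) (T.t.symm b)
    rw [Equiv.apply_symm_apply, Equiv.apply_symm_apply] at h
    exact h.symm

lemma symm_symm : T.symm.symm = T := rfl

lemma mono {a b : dOn (OpenSets B) U} (h : a.1.1 ⊆ b.1.1) : (T.t a).1.1 ⊆ (T.t b).1.1 :=
  sle_iff.mp ((T.ord a b).mp (sle_iff.mpr h))

lemma apply_le_iff {a : dOn (OpenSets B) U} {b : dOn (OpenSets B) V} :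
    (T.t a).1.1 ⊆ b.1.1 ↔ a.1.1 ⊆ (T.t.symm b).1.1 := by
  have h := T.ord a (T.t.symm b)
  rw [Equiv.apply_symm_apply] at h
  rw [← sle_iff, ← sle_iff]
  exact h.symm

lemma exists_pt [QuasiSober B] {u : B} (hu : u ∈ U.1) :
    ∃ v ∈ V.1, ∀ W : dOn (OpenSets B) U, u ∈ W.1.1 ↔ v ∈ (T.t W).1.1 := by
  classical
  set Os : Set B := ⋃ (W : dOn (OpenSets B) U) (_ : u ∉ W.1.1), (T.t W).1.1 with hOsdef
  have hOsopen : IsOpen Os := isOpen_iUnion fun W => isOpen_iUnion fun _ => (T.t W).1.2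
  have hOsV : Os ⊆ V.1 := by
    intro v hv
    simp only [hOsdef, Set.mem_iUnion] at hv
    obtain ⟨W, _, h⟩ := hv
    exact sle_iff.mp (T.t W).2 h
  set Ws : Set B := ⋃ (W : dOn (OpenSets B) U) (_ : u ∉ W.1.1), W.1.1 with hWsdef
  have hWsopen : IsOpen Ws := isOpen_iUnion fun W => isOpen_iUnion fun _ => W.1.2
  have hWsU : Ws ⊆ U.1 := by
    intro b hb
    simp only [hWsdef, Set.mem_iUnion] at hb
    obtain ⟨W, _, h⟩ := hb
    exact sle_iff.mp W.2 h
  have huWs : u ∉ Ws := by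
    intro h
    simp only [hWsdef, Set.mem_iUnion] at h
    obtain ⟨W, hW, hW'⟩ := h
    exact hW hW'
  set WsE : dOn (OpenSets B) U := ⟨⟨Ws, hWsopen⟩, sle_iff.mpr hWsU⟩ with hWsE
  set OsE : dOn (OpenSets B) V := ⟨⟨Os, hOsopen⟩, sle_iff.mpr hOsV⟩ with hOsE
  have hsubOs : ∀ W : dOn (OpenSets B) U, u ∉ W.1.1 → (T.t W).1.1 ⊆ Os := by
    intro W hW
    rw [hOsdef]
    exact Set.subset_iUnion₂ (s := fun (W : dOn (OpenSets B) U) (_ : u ∉ W.1.1) => (T.t W).1.1) W hW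
  have hkey : (T.t WsE).1.1 = Os := by
    apply Set.Subset.antisymm
    · rw [T.apply_le_iff (b := OsE)]
      intro b hb
      change b ∈ Ws at hb
      simp only [hWsdef, Set.mem_iUnion] at hb
      obtain ⟨W, hW, hbW⟩ := hb
      have h2 : W.1.1 ⊆ (T.t.symm OsE).1.1 := (T.apply_le_iff (b := OsE)).mp (hsubOs W hW)
      exact h2 hbW
    · intro v hv
      simp only [hOsdef, Set.mem_iUnion] at hv
      obtain ⟨W, hW, hvW⟩ := hv
      refine T.mono (a := W) ?_ hvW
      show W.1.1 ⊆ Ws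
      exact Set.subset_iUnion₂ (s := fun (W : dOn (OpenSets B) U) (_ : u ∉ W.1.1) => W.1.1) W hW
  set C : Set B := V.1 \ Os with hCdef
  have hCV : C ⊆ V.1 := Set.diff_subset
  have hmeet : ∀ W : dOn (OpenSets B) U, u ∈ W.1.1 → ((T.t W).1.1 ∩ C).Nonempty := by
    intro W hW
    by_contra h
    rw [Set.not_nonempty_iff_eq_empty] at h
    have hsub : (T.t W).1.1 ⊆ Os := by
      intro v hv
      by_contra hvO
      have hvC : v ∈ C := ⟨sle_iff.mp (T.t W).2 hv, hvO⟩
      exact Set.eq_empty_iff_forall_notMem.mp h v ⟨hv, hvC⟩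
    have h2 : W.1.1 ⊆ Ws := by
      have h3 : (T.t W).1.1 ⊆ (T.t WsE).1.1 := by rw [hkey]; exact hsub
      have h4 := (T.ord W WsE).mpr (sle_iff.mpr h3)
      exact sle_iff.mp h4
    exact huWs (h2 hW)
  have hCne : C.Nonempty := ((hmeet ⟨U, sle_refl U⟩ hu).mono Set.inter_subset_right)
  have hmemW : ∀ (G : Set B) (hG : IsOpen G), (C ∩ G).Nonempty →
      u ∈ (T.t.symm ⟨⟨G ∩ V.1, hG.inter V.2⟩, sle_iff.mpr Set.inter_subset_right⟩).1.1 := by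
    intro G hG hne
    set GE : dOn (OpenSets B) V := ⟨⟨G ∩ V.1, hG.inter V.2⟩, sle_iff.mpr Set.inter_subset_right⟩
      with hGE
    by_contra h
    have hsub : (T.t (T.t.symm GE)).1.1 ⊆ Os := hsubOs (T.t.symm GE) h
    rw [Equiv.apply_symm_apply] at hsub
    obtain ⟨c, hcC, hcG⟩ := hne
    exact hcC.2 (hsub ⟨hcG, hCV hcC⟩)
  have hirr : IsIrreducible C := by
    refine ⟨hCne, ?_⟩
    intro G1 G2 hG1 hG2 h1 h2
    set GE1 : dOn (OpenSets B) V := ⟨⟨G1 ∩ V.1, hG1.inter V.2⟩, sle_iff.mpr Set.inter_subset_right⟩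
    set GE2 : dOn (OpenSets B) V := ⟨⟨G2 ∩ V.1, hG2.inter V.2⟩, sle_iff.mpr Set.inter_subset_right⟩
    have hu1 := hmemW G1 hG1 h1
    have hu2 := hmemW G2 hG2 h2
    set W12 : dOn (OpenSets B) U :=
      ⟨⟨(T.t.symm GE1).1.1 ∩ (T.t.symm GE2).1.1, (T.t.symm GE1).1.2.inter (T.t.symm GE2).1.2⟩,
        sle_iff.mpr (Set.Subset.trans Set.inter_subset_left (sle_iff.mp (T.t.symm GE1).2))⟩
      with hW12
    obtain ⟨c, hc1, hc2⟩ := hmeet W12 ⟨hu1, hu2⟩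
    have e1 : T.t (T.t.symm GE1) = GE1 := Equiv.apply_symm_apply _ _
    have e2 : T.t (T.t.symm GE2) = GE2 := Equiv.apply_symm_apply _ _
    have m1 : (T.t W12).1.1 ⊆ G1 ∩ V.1 := by
      have := T.mono (a := W12) (b := T.t.symm GE1) Set.inter_subset_left
      rwa [e1] at this
    have m2 : (T.t W12).1.1 ⊆ G2 ∩ V.1 := by
      have := T.mono (a := W12) (b := T.t.symm GE2) Set.inter_subset_right
      rwa [e2] at this
    exact ⟨c, hc2, (m1 hc1).1, (m2 hc1).1⟩
  obtain ⟨ξ, hξ⟩ := QuasiSober.sober hirr.closure isClosed_closure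
  have hξC : ξ ∈ closure C := by
    rw [← hξ]; exact subset_closure rfl
  have hξV : ξ ∈ V.1 := by
    by_contra h
    have h2 : closure C ⊆ V.1ᶜ := by
      rw [← hξ]
      exact closure_minimal (Set.singleton_subset_iff.mpr h) (isClosed_compl_iff.mpr V.2)
    obtain ⟨c, hc⟩ := hCne
    exact h2 (subset_closure hc) (hCV hc)
  have hξO : ξ ∉ Os := by
    intro h
    have h2 : closure C ⊆ Osᶜ :=
      closure_minimal (fun c hc => hc.2) (isClosed_compl_iff.mpr hOsopen)
    exact h2 hξC h
  refine ⟨ξ, hξV, fun W => ⟨fun hW => ?_, fun hW => ?_⟩⟩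
  · obtain ⟨c, hc1, hc2⟩ := hmeet W hW
    have hcξ : c ∈ closure {ξ} := by rw [hξ]; exact subset_closure hc2
    obtain ⟨z, hz1, hz2⟩ := mem_closure_iff.mp hcξ _ (T.t W).1.2 hc1
    rw [Set.mem_singleton_iff] at hz2
    rwa [← hz2]
  · by_contra h
    exact hξO (hsubOs W h hW)

end ThetaIso

namespace ThetaIso
variable {B : Type*} [TopologicalSpace B] [QuasiSober B] [T0Space B]
  {U V : OpenSets B} (T : ThetaIso B U V)

noncomputable def botFun : ↥U.1 → ↥V.1 := fun u =>
  ⟨(T.exists_pt u.2).choose, (T.exists_pt u.2).choose_spec.1⟩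

lemma bot_char (u : ↥U.1) (W : dOn (OpenSets B) U) :
    u.1 ∈ W.1.1 ↔ (T.botFun u).1 ∈ (T.t W).1.1 :=
  (T.exists_pt u.2).choose_spec.2 W

lemma bot_unique {u : ↥U.1} {v : B} (hv : v ∈ V.1)
    (h : ∀ W : dOn (OpenSets B) U, u.1 ∈ W.1.1 ↔ v ∈ (T.t W).1.1) :
    (T.botFun u).1 = v := by
  apply eq_of_dOn (W := V) (T.botFun u).2 hv
  intro Z
  have h1 := T.bot_char u (T.t.symm Z)
  have h2 := h (T.t.symm Z)
  rw [Equiv.apply_symm_apply] at h1 h2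
  rw [← h1, ← h2]

lemma bot_symm_bot (u : ↥U.1) : T.symm.botFun (T.botFun u) = u := by
  apply Subtype.ext
  apply T.symm.bot_unique u.2
  intro W
  have h := T.bot_char u (T.t.symm W)
  rw [Equiv.apply_symm_apply] at h
  exact h.symm

lemma bot_continuous : Continuous T.botFun := by
  rw [continuous_def]
  intro s hs
  obtain ⟨G, hG, rfl⟩ := isOpen_induced_iff.mp hs
  set GE : dOn (OpenSets B) V := ⟨⟨G ∩ V.1, hG.inter V.2⟩, sle_iff.mpr Set.inter_subset_right⟩
  have key : T.botFun ⁻¹' (Subtype.val ⁻¹' G) = Subtype.val ⁻¹' (T.t.symm GE).1.1 := by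
    ext u
    simp only [Set.mem_preimage]
    have h := T.bot_char u (T.t.symm GE)
    rw [Equiv.apply_symm_apply] at h
    constructor
    · intro hx; exact h.mpr ⟨hx, (T.botFun u).2⟩
    · intro hx; exact (h.mp hx).1
  rw [key]
  exact (T.t.symm GE).1.2.preimage continuous_subtype_val

end ThetaIso


section Sections
variable {X B : Type*} [TopologicalSpace X] [TopologicalSpace B] {π : X → B}

lemma LocalSection.congr_val {s t : LocalSection π} (h : s = t) (b : B) (hs : b ∈ s.dom) :
    ∃ ht : b ∈ t.dom, s.toFun ⟨b, hs⟩ = t.toFun ⟨b, ht⟩ := by subst h; exact ⟨hs, rfl⟩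

lemma xle_iff {ρ σ : LocalSection π} :
    (sectionsPresheaf π).xle ρ σ ↔ ρ.dom ⊆ σ.dom ∧
      ∀ (b : B) (h : b ∈ ρ.dom) (h2 : b ∈ σ.dom), ρ.toFun ⟨b, h⟩ = σ.toFun ⟨b, h2⟩ := by
  constructor
  · intro h
    constructor
    · intro b hb
      obtain ⟨ht, _⟩ := LocalSection.congr_val h b hb
      exact ht.1
    · intro b hb h2
      obtain ⟨ht, he⟩ := LocalSection.congr_val h b hb
      rw [he]; rfl
  · intro ⟨h1, h2⟩
    apply LocalSection.ext'
    · show ρ.dom = σ.dom ∩ ρ.dom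
      exact (Set.inter_eq_right.mpr h1).symm
    · intro b hb hb2
      exact h2 b hb hb2.1

lemma exists_sec (hπ : IsLocalHomeomorph π) (x : X) (U : OpenSets B) (hx : π x ∈ U.1) :
    ∃ (σ : LocalSection π) (h1 : sle ((sectionsPresheaf π).p σ) U) (h2 : π x ∈ σ.dom),
      σ.toFun ⟨π x, h2⟩ = x := by
  obtain ⟨e, hxe, he⟩ := hπ x
  set σ0 : LocalSection π :=
    { dom := e.target
      dom_open := e.open_target
      toFun := fun b => e.symm b.1
      cont := e.continuousOn_symm.comp_continuous continuous_subtype_val (fun b => b.2)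
      sect := fun b => by rw [he]; exact e.right_inv b.2 }
  refine ⟨(sectionsPresheaf π).act σ0 U, sle_iff.mpr Set.inter_subset_right, ⟨?_, hx⟩, ?_⟩
  · show π x ∈ e.target
    rw [he]; exact e.map_source hxe
  · show e.symm (π x) = x
    rw [he]; exact e.left_inv hxe

lemma isOpen_agree (hπ : IsLocalHomeomorph π) (σ τ : LocalSection π) :
    IsOpen {b | ∃ (h1 : b ∈ σ.dom) (h2 : b ∈ τ.dom), σ.toFun ⟨b, h1⟩ = τ.toFun ⟨b, h2⟩} := by
  rw [isOpen_iff_forall_mem_open]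
  rintro b ⟨h1, h2, heq⟩
  obtain ⟨e, hxe, he⟩ := hπ (σ.toFun ⟨b, h1⟩)
  set N1 : Set B := Subtype.val '' (σ.toFun ⁻¹' e.source) with hN1d
  set N2 : Set B := Subtype.val '' (τ.toFun ⁻¹' e.source) with hN2d
  have hN1 : IsOpen N1 := σ.dom_open.isOpenMap_subtype_val _ (e.open_source.preimage σ.cont)
  have hN2 : IsOpen N2 := τ.dom_open.isOpenMap_subtype_val _ (e.open_source.preimage τ.cont)
  refine ⟨N1 ∩ N2, ?_, hN1.inter hN2, ⟨⟨⟨b, h1⟩, hxe, rfl⟩, ⟨⟨b, h2⟩, by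
    show τ.toFun ⟨b, h2⟩ ∈ e.source; rw [← heq]; exact hxe, rfl⟩⟩⟩
  rintro c ⟨⟨c1, hc1, hc1v⟩, ⟨c2, hc2, hc2v⟩⟩
  have hcσ : c ∈ σ.dom := hc1v ▸ c1.2
  have hcτ : c ∈ τ.dom := hc2v ▸ c2.2
  refine ⟨hcσ, hcτ, ?_⟩
  have e1 : (⟨c, hcσ⟩ : ↥σ.dom) = c1 := Subtype.ext hc1v.symm
  have e2 : (⟨c, hcτ⟩ : ↥τ.dom) = c2 := Subtype.ext hc2v.symm
  apply e.injOn (by rw [e1]; exact hc1) (by rw [e2]; exact hc2)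
  rw [← he]
  show π (σ.toFun ⟨c, hcσ⟩) = π (τ.toFun ⟨c, hcτ⟩)
  rw [σ.sect, τ.sect]

lemma common_restriction (hπ : IsLocalHomeomorph π) (σ τ : LocalSection π) (b : B)
    (h1 : b ∈ σ.dom) (h2 : b ∈ τ.dom) (heq : σ.toFun ⟨b, h1⟩ = τ.toFun ⟨b, h2⟩) :
    ∃ ρ : LocalSection π, (sectionsPresheaf π).xle ρ σ ∧ (sectionsPresheaf π).xle ρ τ ∧
      b ∈ ρ.dom := by
  have hA := isOpen_agree hπ σ τ
  refine ⟨(sectionsPresheaf π).act σ ⟨_, hA⟩, ?_, ?_, ?_⟩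
  · rw [xle_iff]
    exact ⟨Set.inter_subset_left, fun c hc hc2 => rfl⟩
  · rw [xle_iff]
    constructor
    · rintro c ⟨hcσ, a1, a2, aeq⟩
      exact a2
    · rintro c ⟨hcσ, a1, a2, aeq⟩ hcτ
      exact aeq
  · exact ⟨h1, h1, h2, heq⟩

lemma isOpen_secImage (hπ : IsLocalHomeomorph π) (σ : LocalSection π) :
    IsOpen {x | ∃ h : π x ∈ σ.dom, σ.toFun ⟨π x, h⟩ = x} := by
  rw [isOpen_iff_forall_mem_open]
  rintro x ⟨hx, hval⟩
  obtain ⟨e, hxe, he⟩ := hπ x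
  set W : Set B := Subtype.val '' (σ.toFun ⁻¹' e.source) with hWd
  have hW : IsOpen W := σ.dom_open.isOpenMap_subtype_val _ (e.open_source.preimage σ.cont)
  refine ⟨e.source ∩ π ⁻¹' W, ?_, e.open_source.inter (hW.preimage hπ.continuous),
    hxe, ⟨⟨π x, hx⟩, by show σ.toFun ⟨π x, hx⟩ ∈ e.source; rw [hval]; exact hxe, rfl⟩⟩
  rintro x' ⟨hx'e, c, hcpre, hcv⟩
  have h : π x' ∈ σ.dom := hcv ▸ c.2
  have e1 : (⟨π x', h⟩ : ↥σ.dom) = c := Subtype.ext hcv.symm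
  refine ⟨h, ?_⟩
  apply e.injOn (by rw [e1]; exact hcpre) hx'e
  rw [← he]
  show π (σ.toFun ⟨π x', h⟩) = π x'
  rw [σ.sect]

end Sections


lemma sec_val_congr {X B : Type*} [TopologicalSpace X] [TopologicalSpace B] {π : X → B}
    {s s' : LocalSection π} (h : s = s') {b b' : B} (hb : b ∈ s.dom) (hb' : b' ∈ s'.dom)
    (hbb : b = b') : s.toFun ⟨b, hb⟩ = s'.toFun ⟨b', hb'⟩ := by
  subst h; subst hbb; rfl

namespace MunnElt

def inv {X E : Type*} [MeetSL E] {P : SPresheaf X E} (t : MunnElt P) : MunnElt P where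
  e := t.f
  f := t.e
  α := t.α.symm
  θ := t.θ.symm
  α_ord x y := by
    have h := t.α_ord (t.α.symm x) (t.α.symm y)
    rw [Equiv.apply_symm_apply, Equiv.apply_symm_apply] at h
    exact h.symm
  θ_ord a b := by
    have h := t.θ_ord (t.θ.symm a) (t.θ.symm b)
    rw [Equiv.apply_symm_apply, Equiv.apply_symm_apply] at h
    exact h.symm
  compat x := by
    have h := t.compat (t.α.symm x)
    rw [Equiv.apply_symm_apply] at h
    have h2 : (⟨P.p x.1, x.2⟩ : dOn E t.f) = t.θ ⟨P.p (t.α.symm x).1, (t.α.symm x).2⟩ :=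
      Subtype.ext h
    rw [h2, Equiv.symm_apply_apply]

lemma inv_inv {X E : Type*} [MeetSL E] {P : SPresheaf X E} (t : MunnElt P) : t.inv.inv = t := rfl

section Munn
variable {X B : Type*} [TopologicalSpace X] [TopologicalSpace B] [QuasiSober B] [T0Space B]
  {π : X → B}

def TI (t : MunnElt (sectionsPresheaf π)) : ThetaIso B t.e t.f := ⟨t.θ, t.θ_ord⟩

lemma TI_inv (t : MunnElt (sectionsPresheaf π)) : t.inv.TI = t.TI.symm := rfl

noncomputable def botF (t : MunnElt (sectionsPresheaf π)) : ↥t.e.1 → ↥t.f.1 := t.TI.botFun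

lemma dom_alpha (t : MunnElt (sectionsPresheaf π)) (σ : (sectionsPresheaf π).sub t.e) :
    (t.α σ).1.dom = (t.θ ⟨(sectionsPresheaf π).p σ.1, σ.2⟩).1.1 :=
  congrArg Subtype.val (t.compat σ)

lemma mem_dom_alpha (t : MunnElt (sectionsPresheaf π)) {σ : LocalSection π}
    (hσ : sle ((sectionsPresheaf π).p σ) t.e) {u : ↥t.e.1} (hu : u.1 ∈ σ.dom) :
    (t.botF u).1 ∈ (t.α ⟨σ, hσ⟩).1.dom := by
  rw [dom_alpha]
  exact (t.TI.bot_char u ⟨(sectionsPresheaf π).p σ, hσ⟩).mp hu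

noncomputable def topF (hπ : IsLocalHomeomorph π) (t : MunnElt (sectionsPresheaf π))
    (x : X) (hx : π x ∈ t.e.1) : X :=
  (t.α ⟨(exists_sec hπ x t.e hx).choose, (exists_sec hπ x t.e hx).choose_spec.choose⟩).1.toFun
    ⟨(t.botF ⟨π x, hx⟩).1,
      t.mem_dom_alpha (exists_sec hπ x t.e hx).choose_spec.choose
        (exists_sec hπ x t.e hx).choose_spec.choose_spec.choose⟩

lemma alpha_val_eq (hπ : IsLocalHomeomorph π) (t : MunnElt (sectionsPresheaf π))
    {σ τ : LocalSection π} (hσ : sle ((sectionsPresheaf π).p σ) t.e)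
    (hτ : sle ((sectionsPresheaf π).p τ) t.e) {x : X} (hx : π x ∈ t.e.1)
    (h2σ : π x ∈ σ.dom) (h2τ : π x ∈ τ.dom)
    (hvσ : σ.toFun ⟨π x, h2σ⟩ = x) (hvτ : τ.toFun ⟨π x, h2τ⟩ = x) :
    (t.α ⟨σ, hσ⟩).1.toFun ⟨(t.botF ⟨π x, hx⟩).1, t.mem_dom_alpha hσ h2σ⟩
      = (t.α ⟨τ, hτ⟩).1.toFun ⟨(t.botF ⟨π x, hx⟩).1, t.mem_dom_alpha hτ h2τ⟩ := by
  obtain ⟨ρ, hρσ, hρτ, hbρ⟩ := common_restriction hπ σ τ (π x) h2σ h2τ (hvσ.trans hvτ.symm)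
  have hρdom : ρ.dom ⊆ σ.dom := (xle_iff.mp hρσ).1
  have hρe : sle ((sectionsPresheaf π).p ρ) t.e := sle_iff.mpr (hρdom.trans (sle_iff.mp hσ))
  have key : ∀ (υ : LocalSection π) (hυ : sle ((sectionsPresheaf π).p υ) t.e)
      (h2 : π x ∈ υ.dom) (hle : (sectionsPresheaf π).xle ρ υ),
      (t.α ⟨υ, hυ⟩).1.toFun ⟨(t.botF ⟨π x, hx⟩).1, t.mem_dom_alpha hυ h2⟩
        = (t.α ⟨ρ, hρe⟩).1.toFun ⟨(t.botF ⟨π x, hx⟩).1, t.mem_dom_alpha hρe hbρ⟩ := by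
    intro υ hυ h2 hle
    have hord := (t.α_ord ⟨ρ, hρe⟩ ⟨υ, hυ⟩).mp hle
    obtain ⟨hd, hv⟩ := xle_iff.mp hord
    exact (hv _ (t.mem_dom_alpha hρe hbρ) (t.mem_dom_alpha hυ h2)).symm
  rw [key σ hσ h2σ hρσ, key τ hτ h2τ hρτ]

lemma topF_spec (hπ : IsLocalHomeomorph π) (t : MunnElt (sectionsPresheaf π)) {x : X}
    (hx : π x ∈ t.e.1) {σ : LocalSection π} (hσ : sle ((sectionsPresheaf π).p σ) t.e)
    (h2 : π x ∈ σ.dom) (hv : σ.toFun ⟨π x, h2⟩ = x) :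
    topF hπ t x hx = (t.α ⟨σ, hσ⟩).1.toFun ⟨(t.botF ⟨π x, hx⟩).1, t.mem_dom_alpha hσ h2⟩ :=
  alpha_val_eq hπ t _ hσ hx _ h2 (exists_sec hπ x t.e hx).choose_spec.choose_spec.choose_spec hv

lemma pi_topF (hπ : IsLocalHomeomorph π) (t : MunnElt (sectionsPresheaf π)) {x : X}
    (hx : π x ∈ t.e.1) : π (topF hπ t x hx) = (t.botF ⟨π x, hx⟩).1 :=
  LocalSection.sect _ _

lemma topF_mem (hπ : IsLocalHomeomorph π) (t : MunnElt (sectionsPresheaf π)) {x : X}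
    (hx : π x ∈ t.e.1) : π (topF hπ t x hx) ∈ t.f.1 := by
  rw [pi_topF hπ t hx]; exact (t.botF ⟨π x, hx⟩).2

lemma topF_inv (hπ : IsLocalHomeomorph π) (t : MunnElt (sectionsPresheaf π)) {x : X}
    (hx : π x ∈ t.e.1) (hy : π (topF hπ t x hx) ∈ t.inv.e.1) :
    topF hπ t.inv (topF hπ t x hx) hy = x := by
  set σ := (exists_sec hπ x t.e hx).choose with hσd
  set h1 := (exists_sec hπ x t.e hx).choose_spec.choose with h1d
  set h2 := (exists_sec hπ x t.e hx).choose_spec.choose_spec.choose with h2d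
  have hval : σ.toFun ⟨π x, h2⟩ = x :=
    (exists_sec hπ x t.e hx).choose_spec.choose_spec.choose_spec
  set y := topF hπ t x hx with hyd
  set τ : LocalSection π := (t.α ⟨σ, h1⟩).1 with hτd
  have hτf : sle ((sectionsPresheaf π).p τ) t.inv.e := (t.α ⟨σ, h1⟩).2
  have hπy : π y = (t.botF ⟨π x, hx⟩).1 := pi_topF hπ t hx
  have h2τ : π y ∈ τ.dom := by rw [hπy]; exact t.mem_dom_alpha h1 h2
  have hvτ : τ.toFun ⟨π y, h2τ⟩ = y := by
    have hb : τ.toFun ⟨π y, h2τ⟩ =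
        τ.toFun ⟨(t.botF ⟨π x, hx⟩).1, t.mem_dom_alpha h1 h2⟩ :=
      sec_val_congr rfl _ _ hπy
    rw [hb, hyd]
    exact (topF_spec hπ t hx h1 h2 hval).symm
  rw [topF_spec hπ t.inv hy hτf h2τ hvτ]
  have hαs : (t.inv.α ⟨τ, hτf⟩).1 = σ := by
    show (t.α.symm ⟨τ, hτf⟩).1 = σ
    have he : (⟨τ, hτf⟩ : (sectionsPresheaf π).sub t.f) = t.α ⟨σ, h1⟩ := Subtype.ext rfl
    rw [he, Equiv.symm_apply_apply]
  have hbot : (t.inv.botF ⟨π y, hy⟩).1 = π x := by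
    have h3 : (⟨π y, hy⟩ : ↥t.f.1) = t.TI.botFun ⟨π x, hx⟩ := Subtype.ext hπy
    show (t.TI.symm.botFun ⟨π y, hy⟩).1 = π x
    rw [h3, ThetaIso.bot_symm_bot]
  exact (sec_val_congr hαs _ h2 hbot).trans hval

end Munn
end MunnElt


namespace MunnElt
section Munn2
variable {X B : Type*} [TopologicalSpace X] [TopologicalSpace B] [QuasiSober B] [T0Space B]
  {π : X → B}

lemma topF_continuous (hπ : IsLocalHomeomorph π) (t : MunnElt (sectionsPresheaf π)) :
    Continuous (fun x : ↥(π ⁻¹' t.e.1) => topF hπ t x.1 x.2) := by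
  rw [continuous_def]
  intro s hs
  have hT : IsOpen {x : X | ∃ h : π x ∈ t.e.1, topF hπ t x h ∈ s} := by
    rw [isOpen_iff_forall_mem_open]
    rintro x0 ⟨hx0, hmem⟩
    set σ := (exists_sec hπ x0 t.e hx0).choose with hσd
    set h1 := (exists_sec hπ x0 t.e hx0).choose_spec.choose with h1d
    set h2 := (exists_sec hπ x0 t.e hx0).choose_spec.choose_spec.choose with h2d
    have hval : σ.toFun ⟨π x0, h2⟩ = x0 :=
      (exists_sec hπ x0 t.e hx0).choose_spec.choose_spec.choose_spec
    set O : Set X := {x | ∃ h : π x ∈ σ.dom, σ.toFun ⟨π x, h⟩ = x} with hOd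
    have hO : IsOpen O := isOpen_secImage hπ σ
    have hUx : ∀ x : ↥O, π x.1 ∈ t.e.1 := fun x => (sle_iff.mp h1) x.2.choose
    set g : ↥O → X := fun x =>
      (t.α ⟨σ, h1⟩).1.toFun ⟨(t.botF ⟨π x.1, hUx x⟩).1, t.mem_dom_alpha h1 x.2.choose⟩
      with hgd
    have hgc : Continuous g := by
      apply (t.α ⟨σ, h1⟩).1.cont.comp
      apply Continuous.subtype_mk
      apply continuous_subtype_val.comp
      exact t.TI.bot_continuous.comp
        (Continuous.subtype_mk (hπ.continuous.comp continuous_subtype_val) _)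
    have hgspec : ∀ x : ↥O, topF hπ t x.1 (hUx x) = g x := by
      intro x
      exact topF_spec hπ t (hUx x) h1 x.2.choose x.2.choose_spec
    refine ⟨Subtype.val '' (g ⁻¹' s), ?_, hO.isOpenMap_subtype_val _ (hs.preimage hgc), ?_⟩
    · rintro x ⟨⟨x', hx'O⟩, hgpre, rfl⟩
      refine ⟨hUx ⟨x', hx'O⟩, ?_⟩
      rw [hgspec ⟨x', hx'O⟩]
      exact hgpre
    · have hx0O : x0 ∈ O := ⟨h2, hval⟩
      refine ⟨⟨x0, hx0O⟩, ?_, rfl⟩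
      show g ⟨x0, hx0O⟩ ∈ s
      rw [← hgspec ⟨x0, hx0O⟩]
      exact hmem
  have hpre : (fun x : ↥(π ⁻¹' t.e.1) => topF hπ t x.1 x.2) ⁻¹' s
      = Subtype.val ⁻¹' {x : X | ∃ h : π x ∈ t.e.1, topF hπ t x h ∈ s} := by
    ext x
    constructor
    · intro h; exact ⟨x.2, h⟩
    · rintro ⟨h, hmem⟩; exact hmem
  rw [hpre]
  exact hT.preimage continuous_subtype_val

noncomputable def iMap (hπ : IsLocalHomeomorph π) (t : MunnElt (sectionsPresheaf π)) :
    PPAuto π where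
  U := t.e.1
  V := t.f.1
  U_open := t.e.2
  V_open := t.f.2
  bot :=
    { toFun := t.botF
      invFun := t.inv.botF
      left_inv := fun u => t.TI.bot_symm_bot u
      right_inv := fun v => t.TI.symm.bot_symm_bot v
      continuous_toFun := t.TI.bot_continuous
      continuous_invFun := t.TI.symm.bot_continuous }
  top :=
    { toFun := fun x => ⟨topF hπ t x.1 x.2, topF_mem hπ t x.2⟩
      invFun := fun y => ⟨topF hπ t.inv y.1 y.2, topF_mem hπ t.inv y.2⟩
      left_inv := fun x => Subtype.ext (topF_inv hπ t x.2 _)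
      right_inv := fun y => Subtype.ext (topF_inv hπ t.inv y.2 _)
      continuous_toFun := (topF_continuous hπ t).subtype_mk _
      continuous_invFun := (topF_continuous hπ t.inv).subtype_mk _ }
  comm := fun x => pi_topF hπ t x.2

end Munn2
end MunnElt


namespace PPAuto
variable {X B : Type*} [TopologicalSpace X] [TopologicalSpace B] {π : X → B}

lemma mapsBot_fun {T : PPAuto π} {u v v' : B} (h : T.mapsBot u v) (h' : T.mapsBot u v') :
    v = v' := by
  obtain ⟨h1, rfl⟩ := h; obtain ⟨h2, rfl⟩ := h'; rfl

lemma mapsTop_fun {T : PPAuto π} {x y y' : X} (h : T.mapsTop x y) (h' : T.mapsTop x y') :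
    y = y' := by
  obtain ⟨h1, rfl⟩ := h; obtain ⟨h2, rfl⟩ := h'; rfl

end PPAuto

namespace MunnElt
section Munn3
variable {X B : Type*} [TopologicalSpace X] [TopologicalSpace B] [QuasiSober B] [T0Space B]
  {π : X → B} (hπ : IsLocalHomeomorph π)

lemma mapsBot_iMap (t : MunnElt (sectionsPresheaf π)) (u v : B) :
    (iMap hπ t).mapsBot u v ↔ u ∈ t.e.1 ∧ v ∈ t.f.1 ∧
      ∀ a b : OpenSets B, t.mapsE a b → (u ∈ a.1 ↔ v ∈ b.1) := by
  constructor
  · rintro ⟨hu, rfl⟩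
    refine ⟨hu, (t.botF ⟨u, hu⟩).2, ?_⟩
    rintro a b ⟨hsa, rfl⟩
    exact t.TI.bot_char ⟨u, hu⟩ ⟨a, hsa⟩
  · rintro ⟨hu, hv, hch⟩
    refine ⟨hu, ?_⟩
    show (t.botF ⟨u, hu⟩).1 = v
    apply t.TI.bot_unique hv
    intro W
    exact hch W.1 (t.θ W).1 ⟨W.2, rfl⟩

lemma theta_top (t : MunnElt (sectionsPresheaf π)) : (t.θ ⟨t.e, sle_refl t.e⟩).1 = t.f := by
  apply Subtype.ext
  apply Set.Subset.antisymm
  · exact sle_iff.mp (t.θ _).2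
  · have h := (t.θ_ord (t.θ.symm ⟨t.f, sle_refl t.f⟩) ⟨t.e, sle_refl t.e⟩).mp
      (t.θ.symm ⟨t.f, sle_refl t.f⟩).2
    rw [Equiv.apply_symm_apply] at h
    exact sle_iff.mp h

lemma sle_mulE {a b c : MunnElt (sectionsPresheaf π)}
    (hc : ∀ h k, c.mapsE h k ↔ ∃ m, b.mapsE h m ∧ a.mapsE m k) {h : OpenSets B} :
    sle h c.e ↔ ∃ hh : sle h b.e, sle (b.θ ⟨h, hh⟩).1 a.e := by
  constructor
  · intro hce
    obtain ⟨m, ⟨hh, hm⟩, ⟨hm2, -⟩⟩ := (hc h (c.θ ⟨h, hce⟩).1).mp ⟨hce, rfl⟩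
    exact ⟨hh, by rw [hm]; exact hm2⟩
  · rintro ⟨hh, h2⟩
    have h3 := (hc h (a.θ ⟨(b.θ ⟨h, hh⟩).1, h2⟩).1).mpr
      ⟨(b.θ ⟨h, hh⟩).1, ⟨hh, rfl⟩, ⟨h2, rfl⟩⟩
    obtain ⟨hh', -⟩ := h3
    exact hh'

lemma mulE_top {a b c : MunnElt (sectionsPresheaf π)}
    (hc : ∀ h k, c.mapsE h k ↔ ∃ m, b.mapsE h m ∧ a.mapsE m k) :
    ∃ m, b.mapsE c.e m ∧ a.mapsE m c.f :=
  (hc c.e c.f).mp ⟨sle_refl c.e, theta_top c⟩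

lemma mapsBot_mul {a b c : MunnElt (sectionsPresheaf π)}
    (hc : ∀ h k, c.mapsE h k ↔ ∃ m, b.mapsE h m ∧ a.mapsE m k) (u w : B) :
    (iMap hπ c).mapsBot u w ↔ ∃ v, (iMap hπ b).mapsBot u v ∧ (iMap hπ a).mapsBot v w := by
  obtain ⟨m0, hbm, ham⟩ := mulE_top hc
  obtain ⟨hceb, hbm2⟩ := hbm
  obtain ⟨hma, ham2⟩ := ham
  constructor
  · intro hw
    have hw' := (mapsBot_iMap hπ c u w).mp hw
    obtain ⟨hu, hwf, hch⟩ := hw'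
    have hub : u ∈ b.e.1 := sle_iff.mp hceb hu
    set v := (b.botF ⟨u, hub⟩).1 with hvd
    have mbv : (iMap hπ b).mapsBot u v := ⟨hub, rfl⟩
    obtain ⟨-, hvf, hchb⟩ := (mapsBot_iMap hπ b u v).mp mbv
    have hvm0 : v ∈ m0.1 := (hchb c.e m0 ⟨hceb, hbm2⟩).mp hu
    have hva : v ∈ a.e.1 := sle_iff.mp hma hvm0
    set w' := (a.botF ⟨v, hva⟩).1 with hw'd
    have maw : (iMap hπ a).mapsBot v w' := ⟨hva, rfl⟩
    obtain ⟨-, hw'f, hcha⟩ := (mapsBot_iMap hπ a v w').mp maw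
    have hcw' : (iMap hπ c).mapsBot u w' := by
      rw [mapsBot_iMap]
      refine ⟨hu, (hcha m0 c.f ⟨hma, ham2⟩).mp hvm0, ?_⟩
      intro h k hk
      obtain ⟨m, hbm', ham'⟩ := (hc h k).mp hk
      rw [hchb h m hbm', hcha m k ham']
    have heq : w' = w := PPAuto.mapsBot_fun hcw' hw
    exact ⟨v, mbv, heq ▸ maw⟩
  · rintro ⟨v, mbv, maw⟩
    obtain ⟨hub, hvb, hchb⟩ := (mapsBot_iMap hπ b u v).mp mbv
    obtain ⟨hva, hwa, hcha⟩ := (mapsBot_iMap hπ a v w).mp maw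
    have hmsle : sle (a.e * b.f) b.f := by
      rw [sle_iff]; exact Set.inter_subset_right
    set hW := b.θ.symm ⟨a.e * b.f, hmsle⟩ with hWd
    have hWval : (b.θ hW).1 = a.e * b.f := by
      rw [hWd, Equiv.apply_symm_apply]
    have hWmapsE : b.mapsE hW.1 (a.e * b.f) := ⟨hW.2, hWval⟩
    have huW : u ∈ hW.1.1 := by
      rw [hchb hW.1 (a.e * b.f) hWmapsE, os_mul_val]
      exact ⟨hva, hvb⟩
    have hWc : sle hW.1 c.e := by
      rw [sle_mulE hc]
      refine ⟨hW.2, ?_⟩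
      show sle (b.θ hW).1 a.e
      rw [hWval, sle_iff]
      exact Set.inter_subset_left
    have hue : u ∈ c.e.1 := sle_iff.mp hWc huW
    rw [mapsBot_iMap]
    refine ⟨hue, (hcha m0 c.f ⟨hma, ham2⟩).mp ((hchb c.e m0 ⟨hceb, hbm2⟩).mp hue), ?_⟩
    intro h k hk
    obtain ⟨m, hbm', ham'⟩ := (hc h k).mp hk
    rw [hchb h m hbm', hcha m k ham']

end Munn3
end MunnElt


namespace MunnElt
section Munn4
variable {X B : Type*} [TopologicalSpace X] [TopologicalSpace B] [QuasiSober B] [T0Space B]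
  {π : X → B} (hπ : IsLocalHomeomorph π)

lemma maps_mapsE {t : MunnElt (sectionsPresheaf π)} {σ τ : LocalSection π} (h : t.maps σ τ) :
    t.mapsE ((sectionsPresheaf π).p σ) ((sectionsPresheaf π).p τ) := by
  obtain ⟨hs, rfl⟩ := h
  exact ⟨hs, (t.compat ⟨σ, hs⟩).symm⟩

lemma mapsTop_iMap (t : MunnElt (sectionsPresheaf π)) (x y : X) :
    (iMap hπ t).mapsTop x y ↔ ∃ σ τ : LocalSection π, t.maps σ τ ∧
      (∃ h : π x ∈ σ.dom, σ.toFun ⟨π x, h⟩ = x) ∧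
      (∃ h : π y ∈ τ.dom, τ.toFun ⟨π y, h⟩ = y) ∧
      (iMap hπ t).mapsBot (π x) (π y) := by
  constructor
  · rintro ⟨hx, rfl⟩
    show ∃ σ τ : LocalSection π, t.maps σ τ ∧
      (∃ h : π x ∈ σ.dom, σ.toFun ⟨π x, h⟩ = x) ∧
      (∃ h : π (topF hπ t x hx) ∈ τ.dom, τ.toFun ⟨π (topF hπ t x hx), h⟩ = topF hπ t x hx) ∧
      (iMap hπ t).mapsBot (π x) (π (topF hπ t x hx))
    set σ := (exists_sec hπ x t.e hx).choose with hσd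
    set h1 := (exists_sec hπ x t.e hx).choose_spec.choose with h1d
    set h2 := (exists_sec hπ x t.e hx).choose_spec.choose_spec.choose with h2d
    have hval : σ.toFun ⟨π x, h2⟩ = x :=
      (exists_sec hπ x t.e hx).choose_spec.choose_spec.choose_spec
    set τ : LocalSection π := (t.α ⟨σ, h1⟩).1 with hτd
    have hπy : π (topF hπ t x hx) = (t.botF ⟨π x, hx⟩).1 := pi_topF hπ t hx
    have h2τ : π (topF hπ t x hx) ∈ τ.dom := by rw [hπy]; exact t.mem_dom_alpha h1 h2
    refine ⟨σ, τ, ⟨h1, rfl⟩, ⟨h2, hval⟩, ⟨h2τ, ?_⟩, ⟨hx, hπy.symm⟩⟩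
    have hb : τ.toFun ⟨π (topF hπ t x hx), h2τ⟩ =
        τ.toFun ⟨(t.botF ⟨π x, hx⟩).1, t.mem_dom_alpha h1 h2⟩ :=
      sec_val_congr rfl _ _ hπy
    rw [hb]
    exact (topF_spec hπ t hx h1 h2 hval).symm
  · rintro ⟨σ, τ, ⟨hσe, hατ⟩, ⟨h2, hvx⟩, ⟨h2y, hvy⟩, ⟨hbu, hbv⟩⟩
    refine ⟨hbu, ?_⟩
    show topF hπ t x hbu = y
    rw [topF_spec hπ t hbu hσe h2 hvx]
    exact (sec_val_congr hατ _ h2y hbv).trans hvy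

lemma mapsTop_mul {a b c : MunnElt (sectionsPresheaf π)}
    (hc1 : ∀ σ ρ : LocalSection π, c.maps σ ρ ↔ ∃ τ, b.maps σ τ ∧ a.maps τ ρ)
    (hc2 : ∀ h k, c.mapsE h k ↔ ∃ m, b.mapsE h m ∧ a.mapsE m k) (x z : X) :
    (iMap hπ c).mapsTop x z ↔ ∃ y, (iMap hπ b).mapsTop x y ∧ (iMap hπ a).mapsTop y z := by
  constructor
  · intro hc
    obtain ⟨σ, ρ, hmaps, ⟨hxσ, hvx⟩, ⟨hzρ, hvz⟩, hbotc⟩ := (mapsTop_iMap hπ c x z).mp hc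
    obtain ⟨τ, hbσ, haρ⟩ := (hc1 σ ρ).mp hmaps
    obtain ⟨v, mbv, mav⟩ := (mapsBot_mul hπ hc2 (π x) (π z)).mp hbotc
    obtain ⟨hub, hvb, hchb⟩ := (mapsBot_iMap hπ b (π x) v).mp mbv
    have hvτ : v ∈ τ.dom :=
      (hchb ((sectionsPresheaf π).p σ) ((sectionsPresheaf π).p τ) (maps_mapsE hbσ)).mp hxσ
    set y := τ.toFun ⟨v, hvτ⟩ with hyd
    have hπy : π y = v := τ.sect _
    have hyτ : π y ∈ τ.dom := by rw [hπy]; exact hvτ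
    have hvyτ : τ.toFun ⟨π y, hyτ⟩ = y := sec_val_congr rfl _ _ hπy
    refine ⟨y, ?_, ?_⟩
    · refine (mapsTop_iMap hπ b x y).mpr ⟨σ, τ, hbσ, ⟨hxσ, hvx⟩, ⟨hyτ, hvyτ⟩, ?_⟩
      rw [hπy]; exact mbv
    · refine (mapsTop_iMap hπ a y z).mpr ⟨τ, ρ, haρ, ⟨hyτ, hvyτ⟩, ⟨hzρ, hvz⟩, ?_⟩
      rw [hπy]; exact mav
  · rintro ⟨y, mTxy, mTyz⟩
    obtain ⟨σ, τ, hbστ, ⟨hxσ, hvx⟩, ⟨hyτ, hvy⟩, mbxy⟩ := (mapsTop_iMap hπ b x y).mp mTxy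
    obtain ⟨τ', ρ, haτρ, ⟨hyτ', hvy'⟩, ⟨hzρ, hvz⟩, mayz⟩ := (mapsTop_iMap hπ a y z).mp mTyz
    obtain ⟨υ, hυτ, hυτ', hyυ⟩ := common_restriction hπ τ τ' (π y) hyτ hyτ' (hvy.trans hvy'.symm)
    obtain ⟨hsb, hab⟩ := hbστ
    obtain ⟨hsa, haa⟩ := haτρ
    have hτf : sle ((sectionsPresheaf π).p τ) b.f := by
      rw [← hab]; exact (b.α ⟨σ, hsb⟩).2
    have hυf : sle ((sectionsPresheaf π).p υ) b.f :=
      sle_iff.mpr ((xle_iff.mp hυτ).1.trans (sle_iff.mp hτf))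
    set σ' := (b.α.symm ⟨υ, hυf⟩).1 with hσ'd
    have hσ'e : sle ((sectionsPresheaf π).p σ') b.e := (b.α.symm ⟨υ, hυf⟩).2
    have hbσ'υ : b.maps σ' υ := by
      refine ⟨hσ'e, ?_⟩
      have he : (⟨σ', hσ'e⟩ : (sectionsPresheaf π).sub b.e) = b.α.symm ⟨υ, hυf⟩ :=
        Subtype.ext rfl
      rw [he, Equiv.apply_symm_apply]
    have hxleσ : (sectionsPresheaf π).xle σ' σ := by
      apply (b.α_ord (b.α.symm ⟨υ, hυf⟩) ⟨σ, hsb⟩).mpr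
      rw [Equiv.apply_symm_apply, hab]
      exact hυτ
    have hυe : sle ((sectionsPresheaf π).p υ) a.e :=
      sle_iff.mpr ((xle_iff.mp hυτ').1.trans (sle_iff.mp hsa))
    set ρ' := (a.α ⟨υ, hυe⟩).1 with hρ'd
    have haυρ' : a.maps υ ρ' := ⟨hυe, rfl⟩
    have hxleρ : (sectionsPresheaf π).xle ρ' ρ := by
      have h := (a.α_ord ⟨υ, hυe⟩ ⟨τ', hsa⟩).mp hυτ'
      rw [haa] at h
      exact h
    have hcm : c.maps σ' ρ' := (hc1 σ' ρ').mpr ⟨υ, hbσ'υ, haυρ'⟩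
    have hbc : (iMap hπ c).mapsBot (π x) (π z) :=
      (mapsBot_mul hπ hc2 _ _).mpr ⟨π y, mbxy, mayz⟩
    obtain ⟨hxbe, hybf, hchxy⟩ := (mapsBot_iMap hπ b (π x) (π y)).mp mbxy
    have hxσ' : π x ∈ σ'.dom :=
      (hchxy ((sectionsPresheaf π).p σ') ((sectionsPresheaf π).p υ) (maps_mapsE hbσ'υ)).mpr hyυ
    have hvxσ' : σ'.toFun ⟨π x, hxσ'⟩ = x := ((xle_iff.mp hxleσ).2 _ hxσ' hxσ).trans hvx
    obtain ⟨hyae, hzaf, hchyz⟩ := (mapsBot_iMap hπ a (π y) (π z)).mp mayz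
    have hzρ' : π z ∈ ρ'.dom :=
      (hchyz ((sectionsPresheaf π).p υ) ((sectionsPresheaf π).p ρ') (maps_mapsE haυρ')).mp hyυ
    have hvzρ' : ρ'.toFun ⟨π z, hzρ'⟩ = z := ((xle_iff.mp hxleρ).2 _ hzρ' hzρ).trans hvz
    exact (mapsTop_iMap hπ c x z).mpr ⟨σ', ρ', hcm, ⟨hxσ', hvxσ'⟩, ⟨hzρ', hvzρ'⟩, hbc⟩

end Munn4
end MunnElt


namespace PPAuto
variable {X B : Type*} [TopologicalSpace X] [TopologicalSpace B] {π : X → B}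

lemma mem_U_iff {T : PPAuto π} {u : B} : u ∈ T.U ↔ ∃ v, T.mapsBot u v :=
  ⟨fun h => ⟨_, h, rfl⟩, fun ⟨_, h, _⟩ => h⟩

lemma mem_V_iff {T : PPAuto π} {v : B} : v ∈ T.V ↔ ∃ u, T.mapsBot u v := by
  constructor
  · intro h
    refine ⟨(T.bot.symm ⟨v, h⟩).1, (T.bot.symm ⟨v, h⟩).2, ?_⟩
    have he : (⟨(T.bot.symm ⟨v, h⟩).1, (T.bot.symm ⟨v, h⟩).2⟩ : ↥T.U) = T.bot.symm ⟨v, h⟩ := rfl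
    rw [he, Homeomorph.apply_symm_apply]
  · rintro ⟨u, hu, rfl⟩
    exact (T.bot ⟨u, hu⟩).2

lemma ext' {s t : PPAuto π} (hU : s.U = t.U) (hV : s.V = t.V)
    (htop : ∀ (x : X) (hx : x ∈ π ⁻¹' s.U) (hx' : x ∈ π ⁻¹' t.U),
      (s.top ⟨x, hx⟩).1 = (t.top ⟨x, hx'⟩).1)
    (hbot : ∀ (u : B) (hu : u ∈ s.U) (hu' : u ∈ t.U),
      (s.bot ⟨u, hu⟩).1 = (t.bot ⟨u, hu'⟩).1) : s = t := by
  cases s with | mk U V hUo hVo top bot comm =>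
  cases t with | mk U' V' hUo' hVo' top' bot' comm' =>
  dsimp at hU hV htop hbot
  subst hU; subst hV
  have h1 : top = top' := Homeomorph.ext fun x => Subtype.ext (htop x.1 x.2 x.2)
  have h2 : bot = bot' := Homeomorph.ext fun u => Subtype.ext (hbot u.1 u.2 u.2)
  subst h1; subst h2
  rfl

lemma ext_of_maps {s t : PPAuto π} (hT : ∀ x y, s.mapsTop x y ↔ t.mapsTop x y)
    (hB : ∀ u v, s.mapsBot u v ↔ t.mapsBot u v) : s = t := by
  have hU : s.U = t.U := by
    ext u; rw [mem_U_iff, mem_U_iff]; exact exists_congr fun v => hB u v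
  have hV : s.V = t.V := by
    ext v; rw [mem_V_iff, mem_V_iff]; exact exists_congr fun u => hB u v
  apply ext' hU hV
  · intro x hx hx'
    obtain ⟨h', hval⟩ := (hT x (s.top ⟨x, hx⟩).1).mp ⟨hx, rfl⟩
    exact hval.symm
  · intro u hu hu'
    obtain ⟨h', hval⟩ := (hB u (s.bot ⟨u, hu⟩).1).mp ⟨hu, rfl⟩
    exact hval.symm

end PPAuto

lemma MunnElt.ext_munn {X E : Type*} [MeetSL E] {P : SPresheaf X E} {t t' : MunnElt P}
    (he : t.e = t'.e) (hf : t.f = t'.f)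
    (hθ : ∀ (W : dOn E t.e) (W' : dOn E t'.e), W.1 = W'.1 → (t.θ W).1 = (t'.θ W').1)
    (hα : ∀ (σ : P.sub t.e) (σ' : P.sub t'.e), σ.1 = σ'.1 → (t.α σ).1 = (t'.α σ').1) :
    t = t' := by
  obtain ⟨e, f, α, θ, αo, θo, cp⟩ := t
  obtain ⟨e', f', α', θ', αo', θo', cp'⟩ := t'
  dsimp at he hf hθ hα
  subst he; subst hf
  have hθ2 : θ = θ' := Equiv.ext fun W => Subtype.ext (hθ W W rfl)
  have hα2 : α = α' := Equiv.ext fun σ => Subtype.ext (hα σ σ rfl)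
  subst hθ2; subst hα2
  rfl

namespace MunnElt
section Munn5
variable {X B : Type*} [TopologicalSpace X] [TopologicalSpace B] [QuasiSober B] [T0Space B]
  {π : X → B} (hπ : IsLocalHomeomorph π)

lemma dom_alpha' (t : MunnElt (sectionsPresheaf π)) {σ : LocalSection π}
    (hσ : sle ((sectionsPresheaf π).p σ) t.e) :
    (t.α ⟨σ, hσ⟩).1.dom = (t.θ ⟨(sectionsPresheaf π).p σ, hσ⟩).1.1 := by
  exact congrArg Subtype.val (t.compat ⟨σ, hσ⟩)

lemma theta_set (t : MunnElt (sectionsPresheaf π)) (W : dOn (OpenSets B) t.e) :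
    (t.θ W).1.1 = {v | ∃ u, u ∈ W.1.1 ∧ (iMap hπ t).mapsBot u v} := by
  ext v
  constructor
  · intro hv
    have hvf : v ∈ t.f.1 := sle_iff.mp (t.θ W).2 hv
    set u := t.TI.symm.botFun ⟨v, hvf⟩ with hud
    have hchar := t.TI.symm.bot_char ⟨v, hvf⟩ (t.θ W)
    rw [show t.TI.symm.t (t.θ W) = W from Equiv.symm_apply_apply _ _] at hchar
    refine ⟨u.1, hchar.mp hv, u.2, ?_⟩
    show (t.TI.botFun ⟨u.1, u.2⟩).1 = v
    have heu : (⟨u.1, u.2⟩ : ↥t.e.1) = u := rfl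
    rw [heu, hud]
    exact congrArg Subtype.val (t.TI.symm.bot_symm_bot ⟨v, hvf⟩)
  · rintro ⟨u, huW, hu, rfl⟩
    exact (t.TI.bot_char ⟨u, hu⟩ W).mp huW

lemma alpha_val_forced (t : MunnElt (sectionsPresheaf π)) {σ : LocalSection π}
    (hσ : sle ((sectionsPresheaf π).p σ) t.e) {x y : X}
    (hmt : (iMap hπ t).mapsTop x y) (hxσ : π x ∈ σ.dom) (hvx : σ.toFun ⟨π x, hxσ⟩ = x)
    {v : B} (hv : v ∈ (t.α ⟨σ, hσ⟩).1.dom) (hπy : π y = v) :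
    (t.α ⟨σ, hσ⟩).1.toFun ⟨v, hv⟩ = y := by
  obtain ⟨hx, rfl⟩ := hmt
  have hspec := topF_spec hπ t hx hσ hxσ hvx
  have hbv : v = (t.botF ⟨π x, hx⟩).1 := by
    rw [← hπy]; exact pi_topF hπ t hx
  exact (sec_val_congr rfl _ (t.mem_dom_alpha hσ hxσ) hbv).trans hspec.symm

lemma alpha_val_exists (t : MunnElt (sectionsPresheaf π)) {σ : LocalSection π}
    (hσ : sle ((sectionsPresheaf π).p σ) t.e) {v : B} (hv : v ∈ (t.α ⟨σ, hσ⟩).1.dom) :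
    ∃ x y, (iMap hπ t).mapsTop x y ∧ (∃ h : π x ∈ σ.dom, σ.toFun ⟨π x, h⟩ = x) ∧ π y = v := by
  have hv' : v ∈ (t.θ ⟨(sectionsPresheaf π).p σ, hσ⟩).1.1 := by
    rw [← dom_alpha' t hσ]; exact hv
  have hvf : v ∈ t.f.1 := sle_iff.mp (t.θ _).2 hv'
  set u := t.TI.symm.botFun ⟨v, hvf⟩ with hud
  have hchar := t.TI.symm.bot_char ⟨v, hvf⟩ (t.θ ⟨(sectionsPresheaf π).p σ, hσ⟩)
  rw [show t.TI.symm.t (t.θ ⟨(sectionsPresheaf π).p σ, hσ⟩) = ⟨(sectionsPresheaf π).p σ, hσ⟩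
    from Equiv.symm_apply_apply _ _] at hchar
  have huσ : u.1 ∈ σ.dom := hchar.mp hv'
  set x := σ.toFun ⟨u.1, huσ⟩ with hxd
  have hπx : π x = u.1 := σ.sect _
  have hxe : π x ∈ t.e.1 := by rw [hπx]; exact u.2
  have hxσ : π x ∈ σ.dom := by rw [hπx]; exact huσ
  refine ⟨x, topF hπ t x hxe, ⟨hxe, rfl⟩, ⟨hxσ, sec_val_congr rfl _ huσ hπx⟩, ?_⟩
  rw [pi_topF hπ t hxe]
  have heu : (⟨π x, hxe⟩ : ↥t.e.1) = u := Subtype.ext hπx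
  rw [heu, hud]
  show (t.TI.symm.symm.botFun (t.TI.symm.botFun ⟨v, hvf⟩)).1 = v
  rw [t.TI.symm.bot_symm_bot ⟨v, hvf⟩]

theorem iMap_inj {t t' : MunnElt (sectionsPresheaf π)} (h : iMap hπ t = iMap hπ t') :
    t = t' := by
  have hBot : ∀ u v, (iMap hπ t).mapsBot u v ↔ (iMap hπ t').mapsBot u v := by
    rw [h]; exact fun _ _ => Iff.rfl
  have hTop : ∀ x y, (iMap hπ t).mapsTop x y ↔ (iMap hπ t').mapsTop x y := by
    rw [h]; exact fun _ _ => Iff.rfl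
  have he : t.e = t'.e := Subtype.ext (congrArg PPAuto.U h)
  have hf : t.f = t'.f := Subtype.ext (congrArg PPAuto.V h)
  apply MunnElt.ext_munn he hf
  · intro W W' hWW
    apply Subtype.ext
    rw [theta_set hπ t W, theta_set hπ t' W']
    ext v
    constructor
    · rintro ⟨u, h1, h2⟩
      exact ⟨u, by rw [← congrArg Subtype.val hWW]; exact h1, (hBot u v).mp h2⟩
    · rintro ⟨u, h1, h2⟩
      exact ⟨u, by rw [congrArg Subtype.val hWW]; exact h1, (hBot u v).mpr h2⟩
  · intro σ σ' hσσ
    apply LocalSection.ext'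
    · rw [dom_alpha t σ, dom_alpha t' σ']
      rw [theta_set hπ t _, theta_set hπ t' _]
      ext v
      constructor
      · rintro ⟨u, h1, h2⟩
        exact ⟨u, by rw [show ((sectionsPresheaf π).p σ'.1).1 = ((sectionsPresheaf π).p σ.1).1
          from congrArg (fun s => s.dom) hσσ.symm]; exact h1, (hBot u v).mp h2⟩
      · rintro ⟨u, h1, h2⟩
        exact ⟨u, by rw [show ((sectionsPresheaf π).p σ.1).1 = ((sectionsPresheaf π).p σ'.1).1
          from congrArg (fun s => s.dom) hσσ]; exact h1, (hBot u v).mpr h2⟩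
    · intro v hv hv'
      obtain ⟨x, y, hmt, hthru, hπy⟩ := alpha_val_exists hπ t σ.2 hv
      obtain ⟨hxσ, hvx⟩ := hthru
      have h1 : (t.α ⟨σ.1, σ.2⟩).1.toFun ⟨v, hv⟩ = y :=
        alpha_val_forced hπ t σ.2 hmt hxσ hvx hv hπy
      have hxσ' : π x ∈ σ'.1.dom := by rw [← hσσ]; exact hxσ
      have hvx' : σ'.1.toFun ⟨π x, hxσ'⟩ = x := (sec_val_congr hσσ.symm _ hxσ rfl).trans hvx
      have h2 : (t'.α ⟨σ'.1, σ'.2⟩).1.toFun ⟨v, hv'⟩ = y :=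
        alpha_val_forced hπ t' σ'.2 ((hTop x y).mp hmt) hxσ' hvx' hv' hπy
      exact h1.trans h2.symm

end Munn5
end MunnElt


lemma subtype_mk_eq {α : Sort*} {p : α → Prop} {a : α} (w : Subtype p) (h : a = w.1)
    {ha : p a} : (⟨a, ha⟩ : Subtype p) = w := Subtype.ext h

namespace PPAuto
section PP1
variable {X B : Type*} [TopologicalSpace X] [TopologicalSpace B] {π : X → B}

def symmPP (T : PPAuto π) : PPAuto π where
  U := T.V
  V := T.U
  U_open := T.V_open
  V_open := T.U_open
  top := T.top.symm
  bot := T.bot.symm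
  comm := by
    intro y
    have hc := T.comm (T.top.symm y)
    have e : T.top (T.top.symm y) = y := T.top.apply_symm_apply y
    rw [e] at hc
    have e2 : (⟨π y.1, y.2⟩ : ↥T.V) = T.bot ⟨π (T.top.symm y).1, (T.top.symm y).2⟩ :=
      Subtype.ext hc
    rw [e2, Homeomorph.symm_apply_apply]

def fwdSet (T : PPAuto π) (W : Set B) : Set B :=
  {v | ∃ h : v ∈ T.V, (T.bot.symm ⟨v, h⟩).1 ∈ W}

lemma fwdSet_open (T : PPAuto π) (W : Set B) (hW : IsOpen W) : IsOpen (fwdSet T W) := by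
  have he : fwdSet T W = Subtype.val '' (T.bot.symm ⁻¹' (Subtype.val ⁻¹' W)) := by
    ext v
    constructor
    · rintro ⟨h, hm⟩; exact ⟨⟨v, h⟩, hm, rfl⟩
    · rintro ⟨p, hm, rfl⟩; exact ⟨p.2, hm⟩
  rw [he]
  exact T.V_open.isOpenMap_subtype_val _
    ((hW.preimage continuous_subtype_val).preimage T.bot.symm.continuous)

lemma fwdSet_sub (T : PPAuto π) (W : Set B) : fwdSet T W ⊆ T.V := fun _ hv => hv.choose

lemma mem_fwdSet (T : PPAuto π) {W : Set B} (u : ↥T.U) :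
    (T.bot u).1 ∈ fwdSet T W ↔ u.1 ∈ W := by
  constructor
  · rintro ⟨h, hm⟩
    have e' : T.bot.symm ⟨(T.bot u).1, h⟩ = u := by
      rw [subtype_mk_eq (T.bot u) rfl]
      exact T.bot.symm_apply_apply u
    rwa [e'] at hm
  · intro hW
    refine ⟨(T.bot u).2, ?_⟩
    have e' : T.bot.symm ⟨(T.bot u).1, (T.bot u).2⟩ = u := by
      rw [subtype_mk_eq (T.bot u) rfl]
      exact T.bot.symm_apply_apply u
    rw [e']
    exact hW

lemma fwdSet_mono (T : PPAuto π) {W W' : Set B} (h : W ⊆ W') : fwdSet T W ⊆ fwdSet T W' :=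
  fun _ hv => ⟨hv.choose, h hv.choose_spec⟩

lemma fwdSet_le (T : PPAuto π) {W W' : Set B} (hW : W ⊆ T.U)
    (h : fwdSet T W ⊆ fwdSet T W') : W ⊆ W' := by
  intro u hu
  have h2 := h ((mem_fwdSet T ⟨u, hW hu⟩).mpr hu)
  exact (mem_fwdSet T ⟨u, hW hu⟩).mp h2

lemma fwd_fwd (T : PPAuto π) {W : Set B} (hW : W ⊆ T.U) :
    fwdSet T.symmPP (fwdSet T W) = W := by
  ext u
  constructor
  · rintro ⟨h, hm⟩
    exact (mem_fwdSet T (⟨u, h⟩ : ↥T.U)).mp hm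
  · intro hu
    exact ⟨hW hu, (mem_fwdSet T (⟨u, hW hu⟩ : ↥T.U)).mpr hu⟩

lemma top_symm_top_val (T : PPAuto π) (z : ↥(π ⁻¹' T.U)) {h : (T.top z).1 ∈ π ⁻¹' T.V} :
    (T.top.symm ⟨(T.top z).1, h⟩).1 = z.1 := by
  rw [subtype_mk_eq (T.top z) rfl, Homeomorph.symm_apply_apply]

noncomputable def fwdSec (T : PPAuto π) (σ : LocalSection π) (hσ : σ.dom ⊆ T.U) :
    LocalSection π where
  dom := fwdSet T σ.dom
  dom_open := fwdSet_open T σ.dom σ.dom_open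
  toFun v := (T.top ⟨σ.toFun ⟨(T.bot.symm ⟨v.1, v.2.choose⟩).1, v.2.choose_spec⟩,
    by rw [Set.mem_preimage, σ.sect]; exact (T.bot.symm ⟨v.1, v.2.choose⟩).2⟩).1
  cont := by
    refine Continuous.subtype_val ?_
    refine Continuous.comp T.top.continuous ?_
    refine Continuous.subtype_mk ?_ _
    refine Continuous.comp σ.cont ?_
    refine Continuous.subtype_mk ?_ _
    refine Continuous.subtype_val ?_
    refine Continuous.comp T.bot.symm.continuous ?_
    exact Continuous.subtype_mk continuous_subtype_val _
  sect := fun v => by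
    rw [T.comm]
    rw [subtype_mk_eq (T.bot.symm ⟨v.1, v.2.choose⟩) (σ.sect _),
      Homeomorph.apply_symm_apply]

lemma fwdSec_val (T : PPAuto π) (σ : LocalSection π) (hσ : σ.dom ⊆ T.U) {v : B}
    (hv : v ∈ fwdSet T σ.dom) {u : ↥T.U} (hu : (T.bot u).1 = v) (huσ : u.1 ∈ σ.dom)
    (hx : σ.toFun ⟨u.1, huσ⟩ ∈ π ⁻¹' T.U) :
    (fwdSec T σ hσ).toFun ⟨v, hv⟩ = (T.top ⟨σ.toFun ⟨u.1, huσ⟩, hx⟩).1 := by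
  have e1 : T.bot.symm ⟨v, hv.choose⟩ = u := by
    rw [subtype_mk_eq (T.bot u) hu.symm]
    exact T.bot.symm_apply_apply u
  have e1v : (T.bot.symm ⟨v, hv.choose⟩).1 = u.1 := congrArg Subtype.val e1
  have e2 : σ.toFun ⟨(T.bot.symm ⟨v, hv.choose⟩).1, hv.choose_spec⟩ = σ.toFun ⟨u.1, huσ⟩ :=
    sec_val_congr rfl _ _ e1v
  exact congrArg (fun z : ↥(π ⁻¹' T.U) => (T.top z).1) (Subtype.ext e2)

lemma fwdSec_dom (T : PPAuto π) (σ : LocalSection π) (hσ : σ.dom ⊆ T.U) :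
    (fwdSec T σ hσ).dom = fwdSet T σ.dom := rfl

lemma fwdSec_fwdSec (T : PPAuto π) (σ : LocalSection π) (hσ : σ.dom ⊆ T.U)
    (h2 : (fwdSec T σ hσ).dom ⊆ T.symmPP.U) :
    fwdSec T.symmPP (fwdSec T σ hσ) h2 = σ := by
  apply LocalSection.ext'
  · exact fwd_fwd T hσ
  · intro u hu hu'
    have hU : u ∈ T.U := hσ hu'
    set w : ↥T.V := T.bot ⟨u, hU⟩ with hwd
    have hwv : (T.symmPP.bot w).1 = u := by
      show (T.bot.symm (T.bot ⟨u, hU⟩)).1 = u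
      rw [Homeomorph.symm_apply_apply]
    have hwm : w.1 ∈ (fwdSec T σ hσ).dom := (mem_fwdSet T ⟨u, hU⟩).mpr hu'
    have hxB : σ.toFun ⟨u, hu'⟩ ∈ π ⁻¹' T.U := by
      rw [Set.mem_preimage, σ.sect]; exact hU
    have hinner : (fwdSec T σ hσ).toFun ⟨w.1, hwm⟩ = (T.top ⟨σ.toFun ⟨u, hu'⟩, hxB⟩).1 :=
      fwdSec_val T σ hσ hwm rfl hu' hxB
    have hxA : (fwdSec T σ hσ).toFun ⟨w.1, hwm⟩ ∈ π ⁻¹' T.symmPP.U := by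
      rw [Set.mem_preimage, (fwdSec T σ hσ).sect]
      exact w.2
    have houter : (fwdSec T.symmPP (fwdSec T σ hσ) h2).toFun ⟨u, hu⟩
        = (T.symmPP.top ⟨(fwdSec T σ hσ).toFun ⟨w.1, hwm⟩, hxA⟩).1 :=
      fwdSec_val T.symmPP (fwdSec T σ hσ) h2 hu hwv hwm hxA
    rw [houter]
    have hstep : (T.symmPP.top ⟨(fwdSec T σ hσ).toFun ⟨w.1, hwm⟩, hxA⟩).1
        = (T.top.symm ⟨(T.top ⟨σ.toFun ⟨u, hu'⟩, hxB⟩).1, by rw [← hinner]; exact hxA⟩).1 :=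
      congrArg (fun z : ↥(π ⁻¹' T.V) => (T.top.symm z).1) (Subtype.ext hinner)
    rw [hstep, top_symm_top_val T ⟨σ.toFun ⟨u, hu'⟩, hxB⟩]

end PP1
end PPAuto


namespace MunnElt
section Munn7
variable {X B : Type*} [TopologicalSpace X] [TopologicalSpace B] [QuasiSober B] [T0Space B]
  {π : X → B}

open PPAuto in
noncomputable def ofPP (T : PPAuto π) : MunnElt (sectionsPresheaf π) where
  e := ⟨T.U, T.U_open⟩
  f := ⟨T.V, T.V_open⟩
  θ :=
    { toFun := fun W => ⟨⟨fwdSet T W.1.1, fwdSet_open T _ W.1.2⟩,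
        sle_iff.mpr (fwdSet_sub T _)⟩
      invFun := fun W => ⟨⟨fwdSet T.symmPP W.1.1, fwdSet_open T.symmPP _ W.1.2⟩,
        sle_iff.mpr (fwdSet_sub T.symmPP _)⟩
      left_inv := fun W => Subtype.ext (Subtype.ext (fwd_fwd T (sle_iff.mp W.2)))
      right_inv := fun W => Subtype.ext (Subtype.ext (fwd_fwd T.symmPP (sle_iff.mp W.2))) }
  θ_ord := fun a b => by
    rw [sle_iff, sle_iff]
    exact ⟨fun h => fwdSet_mono T h, fun h => fwdSet_le T (sle_iff.mp a.2) h⟩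
  α :=
    { toFun := fun σ => ⟨fwdSec T σ.1 (sle_iff.mp σ.2), sle_iff.mpr (fwdSet_sub T _)⟩
      invFun := fun τ => ⟨fwdSec T.symmPP τ.1 (sle_iff.mp τ.2),
        sle_iff.mpr (fwdSet_sub T.symmPP _)⟩
      left_inv := fun σ =>
        Subtype.ext (fwdSec_fwdSec T σ.1 (sle_iff.mp σ.2) (fwdSet_sub T _))
      right_inv := fun τ =>
        Subtype.ext (fwdSec_fwdSec T.symmPP τ.1 (sle_iff.mp τ.2) (fwdSet_sub T.symmPP _)) }
  α_ord := fun x y => by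
    rw [xle_iff, xle_iff]
    constructor
    · rintro ⟨hd, hv⟩
      refine ⟨fwdSet_mono T hd, ?_⟩
      intro v hv1 hv2
      set w : ↥T.U := T.bot.symm ⟨v, hv1.choose⟩ with hwd
      have hbw : (T.bot w).1 = v := by
        rw [hwd, Homeomorph.apply_symm_apply]
      have hwx : w.1 ∈ x.1.dom := hv1.choose_spec
      have hwy : w.1 ∈ y.1.dom := hd hwx
      have hxx : x.1.toFun ⟨w.1, hwx⟩ ∈ π ⁻¹' T.U := by
        rw [Set.mem_preimage, x.1.sect]; exact w.2
      have hxy : y.1.toFun ⟨w.1, hwy⟩ ∈ π ⁻¹' T.U := by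
        rw [Set.mem_preimage, y.1.sect]; exact w.2
      show (fwdSec T x.1 (sle_iff.mp x.2)).toFun ⟨v, hv1⟩
        = (fwdSec T y.1 (sle_iff.mp y.2)).toFun ⟨v, hv2⟩
      refine (fwdSec_val T x.1 _ hv1 hbw hwx hxx).trans (Eq.trans ?_ (fwdSec_val T y.1 _ hv2 hbw hwy hxy).symm)
      exact congrArg (fun z : ↥(π ⁻¹' T.U) => (T.top z).1) (Subtype.ext (hv w.1 hwx hwy))
    · rintro ⟨hd, hv⟩
      refine ⟨fwdSet_le T (sle_iff.mp x.2) hd, ?_⟩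
      intro u hux huy
      have hU : u ∈ T.U := sle_iff.mp x.2 hux
      have hv1 : (T.bot ⟨u, hU⟩).1 ∈ fwdSet T x.1.dom := (mem_fwdSet T ⟨u, hU⟩).mpr hux
      have hv2 : (T.bot ⟨u, hU⟩).1 ∈ fwdSet T y.1.dom := (mem_fwdSet T ⟨u, hU⟩).mpr huy
      have hxx : x.1.toFun ⟨u, hux⟩ ∈ π ⁻¹' T.U := by
        rw [Set.mem_preimage, x.1.sect]; exact hU
      have hxy : y.1.toFun ⟨u, huy⟩ ∈ π ⁻¹' T.U := by
        rw [Set.mem_preimage, y.1.sect]; exact hU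
      have h1 := fwdSec_val T x.1 (sle_iff.mp x.2) hv1 rfl hux hxx
      have h2 := fwdSec_val T y.1 (sle_iff.mp y.2) hv2 rfl huy hxy
      have h3 : (fwdSec T x.1 (sle_iff.mp x.2)).toFun ⟨(T.bot ⟨u, hU⟩).1, hv1⟩
          = (fwdSec T y.1 (sle_iff.mp y.2)).toFun ⟨(T.bot ⟨u, hU⟩).1, hv2⟩ :=
        hv (T.bot ⟨u, hU⟩).1 hv1 hv2
      rw [h1, h2] at h3
      have h4 := T.top.injective (Subtype.ext h3)
      exact congrArg Subtype.val h4
  compat := fun σ => Subtype.ext rfl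

lemma botF_ofPP (T : PPAuto π) {u : B} (hu : u ∈ T.U) (hu2 : u ∈ (ofPP T).e.1) :
    ((ofPP T).botF ⟨u, hu2⟩).1 = (T.bot ⟨u, hu⟩).1 := by
  apply (ofPP T).TI.bot_unique (T.bot ⟨u, hu⟩).2
  intro W
  exact (PPAuto.mem_fwdSet T (W := W.1.1) ⟨u, hu⟩).symm

lemma iMap_ofPP (hπ : IsLocalHomeomorph π) (T : PPAuto π) : iMap hπ (ofPP T) = T := by
  refine PPAuto.ext' rfl rfl ?_ ?_
  · intro x hx hx'
    show topF hπ (ofPP T) x hx = (T.top ⟨x, hx'⟩).1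
    obtain ⟨σ, h1, h2, hval⟩ := exists_sec hπ x (ofPP T).e hx
    rw [topF_spec hπ (ofPP T) hx h1 h2 hval]
    have hbw : (T.bot ⟨π x, hx⟩).1 = ((ofPP T).botF ⟨π x, hx⟩).1 := (botF_ofPP T hx hx).symm
    have hxx : σ.toFun ⟨π x, h2⟩ ∈ π ⁻¹' T.U := by
      rw [Set.mem_preimage, σ.sect]; exact hx
    show (PPAuto.fwdSec T σ (sle_iff.mp h1)).toFun
      ⟨((ofPP T).botF ⟨π x, hx⟩).1, (ofPP T).mem_dom_alpha h1 h2⟩ = (T.top ⟨x, hx'⟩).1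
    exact (PPAuto.fwdSec_val T σ (sle_iff.mp h1) _ hbw h2 hxx).trans
      (congrArg (fun z : ↥(π ⁻¹' T.U) => (T.top z).1) (Subtype.ext hval))
  · intro u hu hu'
    show ((ofPP T).botF ⟨u, hu⟩).1 = (T.bot ⟨u, hu'⟩).1
    exact botF_ofPP T hu' hu

end Munn7
end MunnElt


/-- for an étale bundle `π : X → B` over a sober base, the generalised Munn
semigroup of the sheaf of sections `Γ(π)` is isomorphic to `La(π)`. -/
theorem munn_of_sections_iso {X B : Type*} [TopologicalSpace X] [TopologicalSpace B]
    [QuasiSober B] [T0Space B]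
    (π : X → B) (hπ : IsLocalHomeomorph π) (hsurj : Function.Surjective π)
    (mulT : MunnElt (sectionsPresheaf π) → MunnElt (sectionsPresheaf π) →
      MunnElt (sectionsPresheaf π))
    (hT : IsMunnMul mulT)
    (mulL : PPAuto π → PPAuto π → PPAuto π) (hL : IsPPMul mulL) :
    ∃ i : MunnElt (sectionsPresheaf π) → PPAuto π,
      Function.Bijective i ∧ ∀ a b, i (mulT a b) = mulL (i a) (i b) := by
  refine ⟨MunnElt.iMap hπ, ⟨fun t t' h => MunnElt.iMap_inj hπ h,
    fun T => ⟨MunnElt.ofPP T, MunnElt.iMap_ofPP hπ T⟩⟩, ?_⟩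
  intro a b
  apply PPAuto.ext_of_maps
  · intro x z
    rw [MunnElt.mapsTop_mul hπ (hT a b).1 (hT a b).2 x z]
    exact ((hL (MunnElt.iMap hπ a) (MunnElt.iMap hπ b)).1 x z).symm
  · intro u w
    rw [MunnElt.mapsBot_mul hπ (hT a b).2 u w]
    exact ((hL (MunnElt.iMap hπ a) (MunnElt.iMap hπ b)).2 u w).symm
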